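/- Fix σ² > 0, Π₀ > 0 and q > 0, and for each n ≥ 1 let P_M(n) be the measure that the centered real Gaussian measure with variance Π₀ + σ²/n assigns to the interval [−qσ/√n, qσ/√n]. Then √n · P_M(n) → 2qσ/√(2πΠ₀) as n → ∞; in particular P_M(n) = Θ(1/√n). (This is the miss probability of the size-α Neyman–Pearson test for a perfectly correlated Gaussian signal, taking q to be the (1−α/2) standard normal quantile.) -/

import Mathlib

open MeasureTheory ProbabilityTheory Filter Real

/-- Fix `σ > 0`, `Π₀ > 0` and `q > 0`, and for each `n` let `P_M(n)` be the measure that the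
centered real Gaussian with variance `Π₀ + σ²/n` assigns to `[−qσ/√n, qσ/√n]` (the miss
probability of the size-`α` Neyman–Pearson test for a perfectly correlated signal, `q` being
the `(1−α/2)` standard normal quantile). Then `√n · P_M(n) → 2qσ/√(2πΠ₀)`, so that
`P_M(n) = Θ(1/√n)`. -/
theorem miss_probability_perfectly_correlated (σ Pi0 q : ℝ)
    (hσ : 0 < σ) (hPi : 0 < Pi0) (hq : 0 < q) :
    Filter.Tendsto
      (fun n : ℕ =>
        Real.sqrt n *
          ((gaussianReal 0 ((Pi0 + σ ^ 2 / n).toNNReal))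
              (Set.Icc (-(q * σ / Real.sqrt n)) (q * σ / Real.sqrt n))).toReal)
      Filter.atTop
      (nhds (2 * q * σ / Real.sqrt (2 * Real.pi * Pi0))) := by
  set V : ℕ → ℝ := fun n => Pi0 + σ ^ 2 / n with hV
  have hVpos : ∀ n, 0 < V n := fun n => by
    have : 0 ≤ σ ^ 2 / n := by positivity
    simp only [hV]; linarith
  have hVlim : Tendsto V atTop (nhds Pi0) := by
    have h1 : Tendsto (fun n : ℕ => σ ^ 2 / n) atTop (nhds 0) := by
      have := tendsto_one_div_atTop_nhds_zero_nat.const_mul (σ ^ 2)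
      simpa [div_eq_mul_inv, mul_comm] using this
    simpa using (tendsto_const_nhds (x := Pi0)).add h1
  set g : ℕ → ℝ := fun n =>
    2 * q * σ * (Real.sqrt (2 * π * V n))⁻¹ * Real.exp (-(q ^ 2 * σ ^ 2 / n) / (2 * V n)) with hg
  set h : ℕ → ℝ := fun n => 2 * q * σ * (Real.sqrt (2 * π * V n))⁻¹ with hh
  have hsqrtne : Real.sqrt (2 * π * Pi0) ≠ 0 := by
    have : 0 < 2 * π * Pi0 := by positivity
    exact ne_of_gt (Real.sqrt_pos.mpr this)
  have hhlim : Tendsto h atTop (nhds (2 * q * σ / Real.sqrt (2 * π * Pi0))) := by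
    rw [div_eq_mul_inv]
    exact tendsto_const_nhds.mul
      (((Real.continuous_sqrt.tendsto _).comp (tendsto_const_nhds.mul hVlim)).inv₀ hsqrtne)
  have hglim : Tendsto g atTop (nhds (2 * q * σ / Real.sqrt (2 * π * Pi0))) := by
    have hexp : Tendsto (fun n : ℕ => Real.exp (-(q ^ 2 * σ ^ 2 / n) / (2 * V n))) atTop
        (nhds 1) := by
      have h1 : Tendsto (fun n : ℕ => -(q ^ 2 * σ ^ 2 / n) / (2 * V n)) atTop (nhds 0) := by
        have hnum : Tendsto (fun n : ℕ => -(q ^ 2 * σ ^ 2 / n)) atTop (nhds 0) := by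
          have := tendsto_one_div_atTop_nhds_zero_nat.const_mul (q ^ 2 * σ ^ 2)
          simpa [div_eq_mul_inv, mul_comm] using this.neg
        have hden : Tendsto (fun n : ℕ => 2 * V n) atTop (nhds (2 * Pi0)) :=
          tendsto_const_nhds.mul hVlim
        have h3 := hnum.div hden (by positivity)
        rw [zero_div] at h3
        exact h3
      have h2 := (Real.continuous_exp.tendsto 0).comp h1
      rw [Real.exp_zero] at h2
      exact h2
    have := hhlim.mul hexp
    simpa [hg, hh, mul_comm] using this
  -- Key bounds for each `n ≥ 1`.
  have key : ∀ n : ℕ, 1 ≤ n →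
      g n ≤ Real.sqrt n *
          ((gaussianReal 0 ((Pi0 + σ ^ 2 / n).toNNReal))
              (Set.Icc (-(q * σ / Real.sqrt n)) (q * σ / Real.sqrt n))).toReal ∧
      Real.sqrt n *
          ((gaussianReal 0 ((Pi0 + σ ^ 2 / n).toNNReal))
              (Set.Icc (-(q * σ / Real.sqrt n)) (q * σ / Real.sqrt n))).toReal ≤ h n := by
    intro n hn
    have hVeq : Pi0 + σ ^ 2 / (n : ℝ) = V n := rfl
    rw [hVeq]
    have hVn : 0 < V n := hVpos n
    set c := q * σ / Real.sqrt n with hcdef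
    have hn0 : (0:ℝ) < n := by exact_mod_cast hn
    have hsn : 0 < Real.sqrt n := Real.sqrt_pos.mpr hn0
    have hc : 0 < c := by positivity
    have hcoe : (((V n).toNNReal) : ℝ) = V n := Real.coe_toNNReal _ hVn.le
    have hvne : (V n).toNNReal ≠ 0 := by
      simp [Real.toNNReal_eq_zero, not_le, hVn]
    have hK : 0 < (Real.sqrt (2 * π * V n))⁻¹ := by positivity
    set K := (Real.sqrt (2 * π * V n))⁻¹ with hKdef
    have hmeas : ((gaussianReal 0 ((V n).toNNReal)) (Set.Icc (-c) c)).toReal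
        = ∫ x in Set.Icc (-c) c, gaussianPDFReal 0 ((V n).toNNReal) x := by
      rw [gaussianReal_apply_eq_integral _ hvne, ENNReal.toReal_ofReal]
      exact setIntegral_nonneg measurableSet_Icc fun x _ => gaussianPDFReal_nonneg _ _ _
    have hpdf : ∀ x : ℝ, gaussianPDFReal 0 ((V n).toNNReal) x
        = K * Real.exp (-(x ^ 2) / (2 * V n)) := by
      intro x
      rw [gaussianPDFReal, hcoe, hKdef]
      ring_nf
    have hconst : ∀ A : ℝ, ∫ _x in Set.Icc (-c) c, A = (2 * c) * A := by
      intro A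
      rw [setIntegral_const, measureReal_def, Real.volume_Icc, ENNReal.toReal_ofReal (by linarith), smul_eq_mul]
      ring_nf
    have hintK : IntegrableOn (gaussianPDFReal 0 ((V n).toNNReal)) (Set.Icc (-c) c) volume :=
      (integrable_gaussianPDFReal 0 _).integrableOn
    have hupper : ∫ x in Set.Icc (-c) c, gaussianPDFReal 0 ((V n).toNNReal) x ≤ 2 * c * K := by
      rw [← hconst K]
      refine setIntegral_mono_on hintK (integrableOn_const ?_) measurableSet_Icc ?_
      · rw [Real.volume_Icc]; exact ENNReal.ofReal_lt_top.ne
      · intro x _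
        rw [hpdf x]
        nth_rewrite 2 [← mul_one K]
        refine mul_le_mul_of_nonneg_left ?_ hK.le
        rw [Real.exp_le_one_iff]
        have : 0 < 2 * V n := by linarith
        apply div_nonpos_of_nonpos_of_nonneg <;> nlinarith [sq_nonneg x]
    have hlower : 2 * c * (K * Real.exp (-(c ^ 2) / (2 * V n)))
        ≤ ∫ x in Set.Icc (-c) c, gaussianPDFReal 0 ((V n).toNNReal) x := by
      rw [← hconst (K * Real.exp (-(c ^ 2) / (2 * V n)))]
      refine setIntegral_mono_on (integrableOn_const ?_) hintK measurableSet_Icc ?_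
      · rw [Real.volume_Icc]; exact ENNReal.ofReal_lt_top.ne
      · intro x hx
        rw [hpdf x]
        refine mul_le_mul_of_nonneg_left (Real.exp_le_exp.mpr ?_) hK.le
        have hx2 : x ^ 2 ≤ c ^ 2 := sq_le_sq' hx.1 hx.2
        have h2v : 0 < 2 * V n := by linarith
        exact div_le_div_of_nonneg_right (by linarith) h2v.le
    have hscale : Real.sqrt n * (2 * c) = 2 * q * σ := by
      rw [hcdef]; field_simp
    have hc2 : c ^ 2 = q ^ 2 * σ ^ 2 / n := by
      rw [hcdef, div_pow, Real.sq_sqrt hn0.le]; ring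
    constructor
    · calc g n = Real.sqrt n * (2 * c * (K * Real.exp (-(c ^ 2) / (2 * V n)))) := by
            rw [hg, hc2]
            linear_combination (K * Real.exp (-(q ^ 2 * σ ^ 2 / n) / (2 * V n))) * hscale.symm
      _ ≤ Real.sqrt n * ∫ x in Set.Icc (-c) c, gaussianPDFReal 0 ((V n).toNNReal) x :=
            mul_le_mul_of_nonneg_left hlower hsn.le
      _ = Real.sqrt n * ((gaussianReal 0 ((V n).toNNReal)) (Set.Icc (-c) c)).toReal := by
            rw [hmeas]
    · calc Real.sqrt n * ((gaussianReal 0 ((V n).toNNReal)) (Set.Icc (-c) c)).toReal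
          = Real.sqrt n * ∫ x in Set.Icc (-c) c, gaussianPDFReal 0 ((V n).toNNReal) x := by
            rw [hmeas]
      _ ≤ Real.sqrt n * (2 * c * K) := mul_le_mul_of_nonneg_left hupper hsn.le
      _ = h n := by
            rw [hh]
            linear_combination K * hscale
  refine tendsto_of_tendsto_of_tendsto_of_le_of_le' hglim hhlim ?_ ?_
  · filter_upwards [eventually_ge_atTop 1] with n hn using (key n hn).1
  · filter_upwards [eventually_ge_atTop 1] with n hn using (key n hn).2
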